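/- For all positive integers d and δ one has Σ_{ω ∣ gcd(d,δ)} J₂(ω) · σ(d/ω) = Σ_{l ∣ d} (d/l) · gcd(l,δ)², where both sums range over positive divisors, σ(m) = Σ_{k ∣ m} k is the sum-of-divisors function, and J₂(m) denotes the number of elements of additive order exactly m in (ℤ/mℤ)². -/

import Mathlib

/-- The second Jordan totient `J₂(m)`: the number of elements of additive order
exactly `m` in `(ℤ/mℤ)²`. -/
noncomputable def J2 (m : ℕ) : ℕ := Nat.card {x : ZMod m × ZMod m // addOrderOf x = m}

/-- The `m`-th power sum-of-divisors function `σ_m(k) = Σ_{j ∣ k} j^m`. -/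
def sigmaFn (m k : ℕ) : ℕ := ∑ j ∈ k.divisors, j ^ m

open Finset

private lemma J2_count {n : ℕ} [NeZero n] {ω : ℕ} (hω : ω ∈ n.divisors) :
    (Finset.univ.filter
        (fun x : ZMod n × ZMod n => addOrderOf x = ω)).card = J2 ω := by
  classical
  have hn : n ≠ 0 := NeZero.ne n
  obtain ⟨hωn, -⟩ := Nat.mem_divisors.mp hω
  have hω0 : ω ≠ 0 := fun h => hn (by simpa [h] using hωn)
  haveI : NeZero ω := ⟨hω0⟩
  set c : ZMod n := ((n / ω : ℕ) : ZMod n) with hc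
  have hfω : (zmultiplesHom (ZMod n) c) (ω : ℤ) = 0 := by
    show (ω : ℤ) • c = 0
    rw [natCast_zsmul, hc, nsmul_eq_mul, ← Nat.cast_mul,
      Nat.mul_div_cancel' hωn, ZMod.natCast_self]
  set φ : ZMod ω →+ ZMod n := ZMod.lift ω ⟨zmultiplesHom (ZMod n) c, hfω⟩ with hφ
  have hφnat : ∀ k : ℕ, φ ((k : ℕ) : ZMod ω) = ((k * (n / ω) : ℕ) : ZMod n) := by
    intro k
    have h1 : (((k : ℤ) : ZMod ω)) = ((k : ℕ) : ZMod ω) := by push_cast; rfl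
    have := ZMod.lift_coe ω ⟨zmultiplesHom (ZMod n) c, hfω⟩ (k : ℤ)
    rw [h1] at this
    rw [hφ, this]
    show (k : ℤ) • c = _
    rw [natCast_zsmul, hc, nsmul_eq_mul, ← Nat.cast_mul]
  have hφinj : Function.Injective φ := by
    rw [injective_iff_map_eq_zero]
    intro x hx
    have hxv : ((x.val : ℕ) : ZMod ω) = x := ZMod.natCast_rightInverse x
    rw [← hxv, hφnat] at hx
    have hdvd0 : n ∣ x.val * (n / ω) := (ZMod.natCast_eq_zero_iff _ _).mp hx
    have hdvd : ω * (n / ω) ∣ x.val * (n / ω) := by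
      rw [Nat.mul_div_cancel' hωn]; exact hdvd0
    have hq : 0 < n / ω :=
      Nat.div_pos (Nat.le_of_dvd (Nat.pos_of_ne_zero hn) hωn) (Nat.pos_of_ne_zero hω0)
    have hωx : ω ∣ x.val := (Nat.mul_dvd_mul_iff_right hq).mp hdvd
    have : x.val = 0 := Nat.eq_zero_of_dvd_of_lt hωx (ZMod.val_lt x)
    rw [← hxv, this, Nat.cast_zero]
  have hφsurj : ∀ a : ZMod n, ω • a = 0 → ∃ y, φ y = a := by
    intro a ha
    have hav : ((a.val : ℕ) : ZMod n) = a := ZMod.natCast_rightInverse a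
    have h0 : ((ω * a.val : ℕ) : ZMod n) = 0 := by
      rw [Nat.cast_mul, hav, ← nsmul_eq_mul]; exact ha
    have hdvd0 : n ∣ ω * a.val := (ZMod.natCast_eq_zero_iff _ _).mp h0
    have hdvd : ω * (n / ω) ∣ ω * a.val := by
      rw [Nat.mul_div_cancel' hωn]; exact hdvd0
    have h2 : n / ω ∣ a.val :=
      (mul_dvd_mul_iff_left (a := ω) (by exact_mod_cast hω0)).mp hdvd
    refine ⟨((a.val / (n / ω) : ℕ) : ZMod ω), ?_⟩
    rw [hφnat, Nat.div_mul_cancel h2, hav]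
  set Ψ : ZMod ω × ZMod ω →+ ZMod n × ZMod n := AddMonoidHom.prodMap φ φ with hΨ
  have hΨcoe : ∀ y : ZMod ω × ZMod ω, Ψ y = (φ y.1, φ y.2) := fun y => rfl
  have hΨinj : Function.Injective Ψ := by
    intro a b hab
    rw [hΨcoe, hΨcoe, Prod.ext_iff] at hab
    exact Prod.ext (hφinj hab.1) (hφinj hab.2)
  have hord : ∀ y, addOrderOf (Ψ y) = addOrderOf y :=
    fun y => addOrderOf_injective Ψ hΨinj y
  have hbij : Function.Bijective
      (fun y : {y : ZMod ω × ZMod ω // addOrderOf y = ω} =>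
        (⟨Ψ y.1, by rw [hord]; exact y.2⟩ :
          {x : ZMod n × ZMod n // addOrderOf x = ω})) := by
    constructor
    · intro a b hab
      exact Subtype.ext (hΨinj (congrArg Subtype.val hab))
    · rintro ⟨x, hx⟩
      have hx0 : ω • x = 0 := by rw [← hx]; exact addOrderOf_nsmul_eq_zero x
      have h1 : ω • x.1 = 0 := congrArg Prod.fst hx0
      have h2 : ω • x.2 = 0 := congrArg Prod.snd hx0
      obtain ⟨y1, hy1⟩ := hφsurj x.1 h1
      obtain ⟨y2, hy2⟩ := hφsurj x.2 h2
      have hΨy : Ψ (y1, y2) = x := by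
        rw [hΨcoe]; exact Prod.ext hy1 hy2
      refine ⟨⟨(y1, y2), ?_⟩, ?_⟩
      · rw [← hord, hΨy, hx]
      · exact Subtype.ext hΨy
  have := Nat.card_congr (Equiv.ofBijective _ hbij)
  rw [J2, this, Nat.card_eq_fintype_card, Fintype.card_subtype]

private lemma sum_J2 {n : ℕ} (hn : n ≠ 0) : ∑ ω ∈ n.divisors, J2 ω = n ^ 2 := by
  classical
  haveI : NeZero n := ⟨hn⟩
  have total : (Finset.univ : Finset (ZMod n × ZMod n)).card
      = ∑ ω ∈ n.divisors,
          (Finset.univ.filter (fun x : ZMod n × ZMod n => addOrderOf x = ω)).card := by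
    apply Finset.card_eq_sum_card_fiberwise
    intro x _
    rw [Finset.mem_coe, Nat.mem_divisors]
    refine ⟨addOrderOf_dvd_of_nsmul_eq_zero ?_, hn⟩
    have h1 : n • x.1 = 0 := by
      rw [nsmul_eq_mul, ZMod.natCast_self, zero_mul]
    have h2 : n • x.2 = 0 := by
      rw [nsmul_eq_mul, ZMod.natCast_self, zero_mul]
    exact Prod.ext h1 h2
  have hcard : (Finset.univ : Finset (ZMod n × ZMod n)).card = n ^ 2 := by
    rw [Finset.card_univ, Fintype.card_prod, ZMod.card, sq]
  rw [← hcard, total]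
  exact Finset.sum_congr rfl fun ω hω => (J2_count hω).symm

private lemma gcd_sq {l δ : ℕ} (hl : l ≠ 0) (hδ : δ ≠ 0) :
    ∑ ω ∈ (Nat.gcd l δ).divisors, J2 ω = Nat.gcd l δ ^ 2 :=
  sum_J2 (Nat.gcd_ne_zero_left hl)

/-- `Σ_{ω ∣ gcd(d,δ)} J₂(ω)·σ(d/ω) = Σ_{l ∣ d} (d/l)·gcd(l,δ)²`, where
`σ = σ_1` is the sum-of-divisors function. -/
theorem sum_J2_sigma_eq_sum_gcd_sq (d δ : ℕ) (hd : 0 < d) (hδ : 0 < δ) :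
    ∑ ω ∈ (Nat.gcd d δ).divisors, J2 ω * sigmaFn 1 (d / ω)
      = ∑ l ∈ d.divisors, (d / l) * Nat.gcd l δ ^ 2 := by
  classical
  set F : ArithmeticFunction ℕ :=
    ⟨fun ω => if ω ∣ δ ∧ ω ≠ 0 then J2 ω else 0, by simp⟩ with hF
  have hFapp : ∀ ω, F ω = if ω ∣ δ ∧ ω ≠ 0 then J2 ω else 0 := fun ω => rfl
  have hσ : ∀ m : ℕ, ArithmeticFunction.sigma 1 m = sigmaFn 1 m := by
    intro m
    rw [ArithmeticFunction.sigma_one_apply, sigmaFn]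
    simp [pow_one]
  -- LHS
  have hL : (F * ArithmeticFunction.sigma 1) d = ∑ ω ∈ (Nat.gcd d δ).divisors, J2 ω * sigmaFn 1 (d / ω) := by
    rw [ArithmeticFunction.mul_apply, Nat.sum_divisorsAntidiagonal (fun x y => F x * ArithmeticFunction.sigma 1 y),
      ← Nat.divisors_filter_dvd_of_dvd hd.ne' (Nat.gcd_dvd_left d δ),
      Finset.sum_filter]
    apply Finset.sum_congr rfl
    intro ω hω
    obtain ⟨hωd, -⟩ := Nat.mem_divisors.mp hω
    have hω0 : ω ≠ 0 := fun h => hd.ne' (by simpa [h] using hωd)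
    have hiff : ω ∣ Nat.gcd d δ ↔ (ω ∣ δ ∧ ω ≠ 0) := by
      rw [Nat.dvd_gcd_iff]
      exact ⟨fun h => ⟨h.2, hω0⟩, fun h => ⟨hωd, h.1⟩⟩
    rw [hFapp, hσ]
    by_cases h : ω ∣ Nat.gcd d δ
    · rw [if_pos h, if_pos (hiff.mp h)]
    · rw [if_neg h, if_neg (fun hh => h (hiff.mpr hh)), zero_mul]
  -- RHS
  have hR : (ArithmeticFunction.pow 1 * (F * ArithmeticFunction.zeta)) d = ∑ l ∈ d.divisors, (d / l) * Nat.gcd l δ ^ 2 := by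
    rw [ArithmeticFunction.mul_apply, Nat.sum_divisorsAntidiagonal' (fun x y => ArithmeticFunction.pow 1 x * (F * ArithmeticFunction.zeta) y)]
    apply Finset.sum_congr rfl
    intro l hl
    obtain ⟨hld, -⟩ := Nat.mem_divisors.mp hl
    have hl0 : l ≠ 0 := fun h => hd.ne' (by simpa [h] using hld)
    have hdl0 : d / l ≠ 0 :=
      Nat.div_ne_zero_iff.mpr ⟨hl0, Nat.le_of_dvd hd hld⟩
    have hp : ArithmeticFunction.pow 1 (d / l) = d / l := by
      rw [ArithmeticFunction.pow_apply, if_neg (fun h => hdl0 h.2), pow_one]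
    have hG : (F * ArithmeticFunction.zeta) l = Nat.gcd l δ ^ 2 := by
      rw [ArithmeticFunction.mul_zeta_apply, ← gcd_sq hl0 hδ.ne',
        ← Nat.divisors_filter_dvd_of_dvd hl0 (Nat.gcd_dvd_left l δ),
        Finset.sum_filter]
      apply Finset.sum_congr rfl
      intro ω hω
      obtain ⟨hωl, -⟩ := Nat.mem_divisors.mp hω
      have hω0 : ω ≠ 0 := fun h => hl0 (by simpa [h] using hωl)
      have hiff : ω ∣ Nat.gcd l δ ↔ (ω ∣ δ ∧ ω ≠ 0) := by
        rw [Nat.dvd_gcd_iff]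
        exact ⟨fun h => ⟨h.2, hω0⟩, fun h => ⟨hωl, h.1⟩⟩
      rw [hFapp]
      by_cases h : ω ∣ Nat.gcd l δ
      · rw [if_pos h, if_pos (hiff.mp h)]
      · rw [if_neg h, if_neg (fun hh => h (hiff.mpr hh))]
    rw [hp, hG]
  calc
    ∑ ω ∈ (Nat.gcd d δ).divisors, J2 ω * sigmaFn 1 (d / ω)
        = (F * ArithmeticFunction.sigma 1) d := hL.symm
    _ = (F * (ArithmeticFunction.zeta * ArithmeticFunction.pow 1)) d := by rw [ArithmeticFunction.zeta_mul_pow_eq_sigma]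
    _ = (ArithmeticFunction.pow 1 * (F * ArithmeticFunction.zeta)) d := by rw [← mul_assoc, mul_comm]
    _ = ∑ l ∈ d.divisors, (d / l) * Nat.gcd l δ ^ 2 := hR
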